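/- Let M ≥ 1, let g : ZMod M → ℂ be nowhere vanishing, let q, p ∈ ZMod M and t ∈ {0,1,2}, and let g_{qpt} be the associated auxiliary window. Then for every x : ZMod M → ℂ and every (k,ℓ) ∈ ZMod M × ZMod M, one has ⟨x, π(k,ℓ) g_{qpt}⟩ = ⟨x, π(k,ℓ) g⟩ + e^{−2πit/3} · e^{2πikp/M} · ⟨x, π(k+q, ℓ+p) g⟩. -/

import Mathlib

open scoped BigOperators

/-- `e^{2πi a/M}` for `a : ZMod M`. -/
noncomputable def eM (M : ℕ) (a : ZMod M) : ℂ :=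
  Complex.exp (2 * Real.pi * Complex.I * (a.val : ℂ) / (M : ℂ))

/-- Time-frequency shift `π(k,ℓ) g (m) = e^{2πi ℓ m / M} g(m-k)`. -/
noncomputable def tf (M : ℕ) (kl : ZMod M × ZMod M) (g : ZMod M → ℂ) : ZMod M → ℂ :=
  fun m => eM M (kl.2 * m) * g (m - kl.1)

/-- Inner product on `ℂ^M = (ZMod M → ℂ)`. -/
noncomputable def inn (M : ℕ) [NeZero M] (x y : ZMod M → ℂ) : ℂ :=
  ∑ m : ZMod M, x m * (starRingEnd ℂ) (y m)

/-- Auxiliary window `g_{qpt}(m) = g(m) (1 + e^{2πi(mp/M + t/3)} g(m-q)/g(m))`. -/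
noncomputable def gAux (M : ℕ) (g : ZMod M → ℂ) (q p : ZMod M) (t : Fin 3) : ZMod M → ℂ :=
  fun m => g m *
    (1 + eM M (m * p) * Complex.exp (2 * Real.pi * Complex.I * ((t : ℕ) : ℂ) / 3) *
      g (m - q) / g m)

lemma eM_mul_eM (M : ℕ) [NeZero M] (a b : ZMod M) : eM M a * eM M b = eM M (a + b) := by
  have hM : (M : ℂ) ≠ 0 := Nat.cast_ne_zero.mpr (NeZero.ne M)
  unfold eM
  rw [← Complex.exp_add]
  have hval : (((a + b).val : ℂ)) + (M : ℂ) * (((a.val + b.val) / M : ℕ) : ℂ)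
      = (a.val : ℂ) + (b.val : ℂ) := by
    have h := Nat.mod_add_div (a.val + b.val) M
    rw [ZMod.val_add]
    exact_mod_cast h
  have key : 2 * Real.pi * Complex.I * (a.val : ℂ) + 2 * Real.pi * Complex.I * (b.val : ℂ)
      = 2 * Real.pi * Complex.I * ((a + b).val : ℂ)
        + (((a.val + b.val) / M : ℕ) : ℂ) * (2 * Real.pi * Complex.I) * M := by
    linear_combination (-(2 * Real.pi * Complex.I)) * hval
  have harg : 2 * Real.pi * Complex.I * (a.val : ℂ) / M + 2 * Real.pi * Complex.I * (b.val : ℂ) / M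
      = 2 * Real.pi * Complex.I * ((a + b).val : ℂ) / M
        + (((a.val + b.val) / M : ℕ) : ℂ) * (2 * Real.pi * Complex.I) := by
    rw [← add_div, key, add_div, mul_div_cancel_right₀ _ hM]
  rw [harg, Complex.exp_add]
  have hcast : ((((a.val + b.val) / M : ℕ) : ℂ)) = (((((a.val + b.val) / M : ℕ) : ℤ)) : ℂ) :=
    (Int.cast_natCast _).symm
  rw [hcast, Complex.exp_int_mul_two_pi_mul_I, mul_one]

lemma eM_zero (M : ℕ) [NeZero M] : eM M 0 = 1 := by
  simp [eM, ZMod.val_zero]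

lemma conj_eM (M : ℕ) [NeZero M] (a : ZMod M) :
    (starRingEnd ℂ) (eM M a) = eM M (-a) := by
  have h1 : eM M a * eM M (-a) = 1 := by rw [eM_mul_eM]; simp [eM_zero]
  have h2 : (starRingEnd ℂ) (eM M a) * eM M a = 1 := by
    rw [eM, ← Complex.exp_conj, ← Complex.exp_add]
    have : (starRingEnd ℂ) (2 * Real.pi * Complex.I * (a.val : ℂ) / M)
        = -(2 * Real.pi * Complex.I * (a.val : ℂ) / M) := by
      simp only [map_div₀, map_mul, Complex.conj_I, Complex.conj_natCast,
        Complex.conj_ofReal, map_ofNat]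
      ring
    rw [this]
    simp
  have e1 : eM M (-a) = (eM M a)⁻¹ := eq_inv_of_mul_eq_one_right (by rw [mul_comm] at h1 ⊢; exact h1)
  have e2 : (starRingEnd ℂ) (eM M a) = (eM M a)⁻¹ := eq_inv_of_mul_eq_one_left h2
  rw [e1, e2]

theorem stmt0 (M : ℕ) [NeZero M] (g : ZMod M → ℂ) (hg : ∀ m, g m ≠ 0)
    (q p : ZMod M) (t : Fin 3) (x : ZMod M → ℂ) (k ℓ : ZMod M) :
    inn M x (tf M (k, ℓ) (gAux M g q p t)) =
      inn M x (tf M (k, ℓ) g) +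
        Complex.exp (-(2 * Real.pi * Complex.I * ((t : ℕ) : ℂ) / 3)) * eM M (k * p) *
          inn M x (tf M (k + q, ℓ + p) g) := by
  set ct := Complex.exp (2 * Real.pi * Complex.I * ((t : ℕ) : ℂ) / 3) with hct
  unfold inn
  rw [Finset.mul_sum, ← Finset.sum_add_distrib]
  apply Finset.sum_congr rfl
  intro m _
  have hconj_ct : (starRingEnd ℂ) ct
      = Complex.exp (-(2 * Real.pi * Complex.I * ((t : ℕ) : ℂ) / 3)) := by
    rw [hct, ← Complex.exp_conj]
    congr 1
    simp only [map_div₀, map_mul, Complex.conj_I, Complex.conj_natCast,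
      Complex.conj_ofReal, map_ofNat]
    ring
  have hsplit : gAux M g q p t (m - k)
      = g (m - k) + eM M ((m - k) * p) * ct * g (m - k - q) := by
    unfold gAux
    rw [mul_add, mul_one, mul_comm (g (m - k)), div_mul_cancel₀ _ (hg (m - k))]
  simp only [tf, hsplit]
  rw [mul_add, map_add, mul_add]
  congr 1
  rw [map_mul, map_mul, map_mul, map_mul, conj_eM, conj_eM, conj_eM, hconj_ct]
  have hE : eM M (-(ℓ * m)) * eM M (-((m - k) * p))
      = eM M (k * p) * eM M (-((ℓ + p) * m)) := by
    rw [eM_mul_eM, eM_mul_eM]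
    congr 1
    ring
  have hg' : (m - (k + q)) = (m - k - q) := by ring
  rw [hg']
  linear_combination (x m * (starRingEnd ℂ) (g (m - k - q)) *
    Complex.exp (-(2 * Real.pi * Complex.I * ((t : ℕ) : ℂ) / 3))) * hE
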